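/- Let r_i(·) be the rank function on ℝ^n with 'first' method tie-breaking, let φ : ℕ → ℝ be monotone increasing, and define the rank sum statistic t(z, y) = Σ_{i=1}^n z_i φ(r_i(y)). Then t is effect increasing: for all z ∈ {0,1}^n and y, η, ξ ∈ ℝ^n with η ≥ 0 ≥ ξ coordinatewise, t(z, y + z∘η + (1−z)∘ξ) ≥ t(z, y). -/

import Mathlib

open Finset

section Aux

variable {n : ℕ} {α : Type*} [LinearOrder α]

/-- Number of indices in `S` whose `w`-value is at most `w i`. -/
noncomputable def rnk (S : Finset (Fin n)) (w : Fin n → α) (i : Fin n) : ℕ :=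
  (S.filter fun j => w j ≤ w i).card

lemma rnk_mono (S : Finset (Fin n)) (w : Fin n → α) {i j : Fin n} (h : w i ≤ w j) :
    rnk S w i ≤ rnk S w j := by
  apply card_le_card
  intro x hx
  simp only [mem_filter] at hx ⊢
  exact ⟨hx.1, hx.2.trans h⟩

lemma rnk_strict (S : Finset (Fin n)) (w : Fin n → α) {i j : Fin n}
    (hj : j ∈ S) (h : w i < w j) : rnk S w i < rnk S w j := by
  apply card_lt_card
  rw [Finset.ssubset_iff_of_subset]
  · exact ⟨j, by simp [mem_filter, hj], by simp [mem_filter, h, not_le.2 h]⟩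
  · intro x hx
    simp only [mem_filter] at hx ⊢
    exact ⟨hx.1, hx.2.trans h.le⟩

lemma rnk_injOn (S : Finset (Fin n)) (w : Fin n → α) (hw : Function.Injective w)
    {i j : Fin n} (hi : i ∈ S) (hj : j ∈ S) (h : rnk S w i = rnk S w j) : i = j := by
  rcases lt_trichotomy (w i) (w j) with hlt | heq | hgt
  · exact absurd h (Nat.ne_of_lt (rnk_strict S w hj hlt))
  · exact hw heq
  · exact absurd h.symm (Nat.ne_of_lt (rnk_strict S w hi hgt))

lemma le_of_rnk_le (S : Finset (Fin n)) (w : Fin n → α)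
    {i j : Fin n} (hi : i ∈ S) (h : rnk S w i ≤ rnk S w j) : w i ≤ w j := by
  by_contra hc
  exact absurd h (not_le.2 (rnk_strict S w hi (not_le.1 hc)))

lemma one_le_rnk (S : Finset (Fin n)) (w : Fin n → α) {i : Fin n} (hi : i ∈ S) :
    1 ≤ rnk S w i := by
  rw [Nat.one_le_iff_ne_zero, ← Nat.pos_iff_ne_zero, rnk, card_pos]
  exact ⟨i, by simp [mem_filter, hi]⟩

lemma rnk_le_card (S : Finset (Fin n)) (w : Fin n → α) (i : Fin n) :
    rnk S w i ≤ S.card := card_le_card (filter_subset _ _)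

lemma count_rnk_le (S : Finset (Fin n)) (w : Fin n → α) (hw : Function.Injective w) (t : ℕ) :
    (S.filter fun j => rnk S w j ≤ t).card ≤ t := by
  have h := Finset.card_le_card_of_injOn (rnk S w)
    (s := S.filter fun j => rnk S w j ≤ t) (t := Finset.Icc 1 t)
    (fun a ha => by
      rw [Finset.mem_coe, mem_filter] at ha
      rw [Finset.mem_coe, Finset.mem_Icc]
      exact ⟨one_le_rnk S w ha.1, ha.2⟩)
    (fun a ha b hb hab => rnk_injOn S w hw (mem_filter.1 ha).1 (mem_filter.1 hb).1 hab)
  simpa [Nat.card_Icc] using h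

lemma rnk_surjOn (S : Finset (Fin n)) (w : Fin n → α) (hw : Function.Injective w)
    {t : ℕ} (ht : t ∈ Finset.Icc 1 S.card) : ∃ i ∈ S, rnk S w i = t := by
  have key := Finset.surj_on_of_inj_on_of_card_le (s := S) (t := Finset.Icc 1 S.card)
    (fun a _ => rnk S w a)
    (fun a ha => by simp only [Finset.mem_Icc]; exact ⟨one_le_rnk S w ha, rnk_le_card S w a⟩)
    (fun a₁ a₂ ha₁ ha₂ h => rnk_injOn S w hw ha₁ ha₂ h)
    (by simp [Nat.card_Icc])
  obtain ⟨a, ha, hat⟩ := key t ht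
  exact ⟨a, ha, hat.symm⟩

/-- The key counting identity. -/
lemma count_eq (T : Finset (Fin n)) (w : Fin n → α) (hw : Function.Injective w) (k : ℕ) :
    (T.filter fun i => rnk T w i + rnk Tᶜ w i ≤ k).card
      = ((Finset.Icc 1 T.card).filter fun t =>
          t ≤ (T.filter fun i => rnk Tᶜ w i + t ≤ k).card).card := by
  apply Finset.card_bij (fun a _ => rnk T w a)
  · intro a ha
    simp only [mem_filter] at ha ⊢
    obtain ⟨haT, hak⟩ := ha
    refine ⟨Finset.mem_Icc.2 ⟨one_le_rnk T w haT, rnk_le_card T w a⟩, ?_⟩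
    have hsub : (T.filter fun j => w j ≤ w a) ⊆
        (T.filter fun i => rnk Tᶜ w i + rnk T w a ≤ k) := by
      intro j hj
      simp only [mem_filter] at hj ⊢
      refine ⟨hj.1, ?_⟩
      have h1 : rnk Tᶜ w j ≤ rnk Tᶜ w a := rnk_mono _ _ hj.2
      omega
    calc rnk T w a = (T.filter fun j => w j ≤ w a).card := rfl
      _ ≤ _ := card_le_card hsub
  · intro a ha b hb h
    exact rnk_injOn T w hw (mem_filter.1 ha).1 (mem_filter.1 hb).1 h
  · intro t ht
    simp only [mem_filter] at ht
    obtain ⟨htIcc, htcard⟩ := ht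
    obtain ⟨i, hiT, hit⟩ := rnk_surjOn T w hw htIcc
    have h1t : 1 ≤ t := (Finset.mem_Icc.1 htIcc).1
    have hexists : ∃ j ∈ T.filter (fun i => rnk Tᶜ w i + t ≤ k), t ≤ rnk T w j := by
      by_contra hc
      push_neg at hc
      have hsub : (T.filter fun i => rnk Tᶜ w i + t ≤ k) ⊆
          (T.filter fun j => rnk T w j ≤ t - 1) := by
        intro x hx
        have := hc x hx
        simp only [mem_filter] at hx ⊢
        exact ⟨hx.1, by omega⟩
      have := (card_le_card hsub).trans (count_rnk_le T w hw (t - 1))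
      omega
    obtain ⟨j, hj, htj⟩ := hexists
    simp only [mem_filter] at hj
    have hwij : w i ≤ w j := le_of_rnk_le T w hiT (by omega)
    have hk : rnk Tᶜ w i ≤ rnk Tᶜ w j := rnk_mono _ _ hwij
    refine ⟨i, ?_, hit⟩
    simp only [mem_filter]
    exact ⟨hiT, by omega⟩

/-- Comparison of counts under pointwise domination of the control counts. -/
lemma count_le (T : Finset (Fin n)) (w w' : Fin n → α)
    (hw : Function.Injective w) (hw' : Function.Injective w')
    (hk : ∀ i ∈ T, rnk Tᶜ w i ≤ rnk Tᶜ w' i) (k : ℕ) :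
    (T.filter fun i => rnk T w' i + rnk Tᶜ w' i ≤ k).card
      ≤ (T.filter fun i => rnk T w i + rnk Tᶜ w i ≤ k).card := by
  rw [count_eq T w hw k, count_eq T w' hw' k]
  apply card_le_card
  intro t ht
  simp only [mem_filter] at ht ⊢
  refine ⟨ht.1, ht.2.trans (card_le_card ?_)⟩
  intro x hx
  simp only [mem_filter] at hx ⊢
  refine ⟨hx.1, ?_⟩
  have := hk x hx.1
  omega

lemma rnk_univ_split (T : Finset (Fin n)) (w : Fin n → α) (i : Fin n) :
    rnk Finset.univ w i = rnk T w i + rnk Tᶜ w i := by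
  unfold rnk
  rw [← Finset.card_union_of_disjoint]
  · congr 1
    ext j
    simp only [mem_union, mem_filter, mem_univ, true_and, Finset.mem_compl]
    tauto
  · rw [Finset.disjoint_left]
    intro x hx hx'
    simp only [mem_filter, Finset.mem_compl] at hx hx'
    exact hx'.1 hx.1

end Aux

/-- Telescoping representation of a score. -/
lemma tele (n : ℕ) (φ : ℕ → ℝ) (r : ℕ) (hr : r ≤ n) :
    φ r = φ 0 + ∑ k ∈ Finset.range n, (if k < r then φ (k + 1) - φ k else 0) := by
  have h1 : ∑ k ∈ Finset.range n, (if k < r then φ (k + 1) - φ k else 0)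
      = ∑ k ∈ (Finset.range n).filter (fun k => k < r), (φ (k + 1) - φ k) :=
    (Finset.sum_filter _ _).symm
  have h2 : (Finset.range n).filter (fun k => k < r) = Finset.range r := by
    ext x
    simp only [Finset.mem_filter, Finset.mem_range]
    omega
  rw [h1, h2, Finset.sum_range_sub]
  ring

/-- Expanding a sum of scores of bounded ranks into threshold counts. -/
lemma sum_phi {n : ℕ} (T : Finset (Fin n)) (φ : ℕ → ℝ) (R : Fin n → ℕ)
    (hR : ∀ i, R i ≤ n) :
    ∑ i ∈ T, φ (R i)
      = T.card • φ 0 + ∑ k ∈ Finset.range n,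
          ((T.filter fun i => k < R i).card • (φ (k + 1) - φ k)) := by
  calc ∑ i ∈ T, φ (R i)
      = ∑ i ∈ T, (φ 0 + ∑ k ∈ Finset.range n, (if k < R i then φ (k + 1) - φ k else 0)) :=
        Finset.sum_congr rfl fun i _ => tele n φ (R i) (hR i)
    _ = ∑ i ∈ T, φ 0
        + ∑ i ∈ T, ∑ k ∈ Finset.range n, (if k < R i then φ (k + 1) - φ k else 0) :=
        Finset.sum_add_distrib
    _ = T.card • φ 0 + ∑ k ∈ Finset.range n,
          ∑ i ∈ T, (if k < R i then φ (k + 1) - φ k else 0) := by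
        rw [Finset.sum_const, Finset.sum_comm]
    _ = _ := by
        congr 1
        apply Finset.sum_congr rfl
        intro k _
        rw [← Finset.sum_filter, Finset.sum_const]

section Link
variable {n : ℕ}

noncomputable def wlex (y : Fin n → ℝ) (i : Fin n) : ℝ ×ₗ Fin n := toLex (y i, i)

lemma wlex_inj (y : Fin n → ℝ) : Function.Injective (wlex y) := by
  intro i j h
  simpa [wlex] using congrArg (fun p => (ofLex p).2) h

lemma wlex_le_iff (y : Fin n → ℝ) {i j : Fin n} :
    wlex y j ≤ wlex y i ↔ (y j < y i ∨ (y j = y i ∧ j ≤ i)) := by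
  simp [wlex, Prod.Lex.le_iff]

end Link

/-- Rank with the "first" method for ties. -/
noncomputable def rankFirst (n : ℕ) (y : Fin n → ℝ) (i : Fin n) : ℕ :=
  (Finset.univ.filter fun j => y j < y i).card +
  (Finset.univ.filter fun j => y j = y i ∧ j ≤ i).card

lemma rankFirst_eq {n : ℕ} (y : Fin n → ℝ) (i : Fin n) :
    rankFirst n y i = rnk Finset.univ (wlex y) i := by
  unfold rankFirst rnk
  rw [← Finset.card_union_of_disjoint]
  · congr 1
    ext j
    simp only [mem_union, mem_filter, mem_univ, true_and, wlex_le_iff]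
  · rw [Finset.disjoint_left]
    intro x hx hx'
    simp only [mem_filter] at hx hx'
    exact absurd hx'.2.1 (ne_of_lt hx.2)

lemma rnk_wlex_le {n : ℕ} (y : Fin n → ℝ) (i : Fin n) :
    rnk Finset.univ (wlex y) i ≤ n := by
  calc rnk Finset.univ (wlex y) i ≤ (Finset.univ : Finset (Fin n)).card :=
        Finset.card_le_card (Finset.filter_subset _ _)
    _ = n := by simp

/-- the rank sum statistic with a monotone score function is effect increasing. -/
theorem stmt4 (n : ℕ) (φ : ℕ → ℝ) (hφ : Monotone φ)
    (z y η ξ : Fin n → ℝ) (hz : ∀ i, z i = 0 ∨ z i = 1)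
    (hη : ∀ i, 0 ≤ η i) (hξ : ∀ i, ξ i ≤ 0) :
    ∑ i, z i * φ (rankFirst n y i)
      ≤ ∑ i, z i * φ (rankFirst n (fun j => y j + z j * η j + (1 - z j) * ξ j) i) := by
  classical
  set y' : Fin n → ℝ := fun j => y j + z j * η j + (1 - z j) * ξ j with hy'
  set T : Finset (Fin n) := Finset.univ.filter (fun i => z i = 1) with hT
  have hmemT : ∀ i, i ∈ T ↔ z i = 1 := by
    intro i; simp [hT]
  -- rewrite the statistic as a sum over T
  have hsum : ∀ u : Fin n → ℝ,
      ∑ i, z i * φ (rankFirst n u i) = ∑ i ∈ T, φ (rnk Finset.univ (wlex u) i) := by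
    intro u
    rw [Finset.sum_filter]
    apply Finset.sum_congr rfl
    intro i _
    rcases hz i with h | h <;> simp [h, rankFirst_eq]
  rw [hsum y, hsum y']
  -- pointwise comparison of control counts
  have hkey : ∀ i ∈ T, rnk Tᶜ (wlex y) i ≤ rnk Tᶜ (wlex y') i := by
    intro i hiT
    apply Finset.card_le_card
    intro j hj
    simp only [rnk, Finset.mem_filter, Finset.mem_compl] at hj ⊢
    refine ⟨hj.1, ?_⟩
    have hzi : z i = 1 := (hmemT i).1 hiT
    have hzj : z j = 0 := by
      rcases hz j with h | h
      · exact h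
      · exact absurd ((hmemT j).2 h) hj.1
    have hyi : y' i = y i + η i := by simp [hy', hzi]
    have hyj : y' j = y j + ξ j := by simp [hy', hzj]
    rw [wlex_le_iff] at hj ⊢
    have hji : y' j ≤ y j := by rw [hyj]; linarith [hξ j]
    have hii : y i ≤ y' i := by rw [hyi]; linarith [hη i]
    rcases hj.2 with hlt | ⟨heq, hle⟩
    · exact Or.inl (by linarith)
    · rcases lt_or_eq_of_le (show y' j ≤ y' i by linarith) with h | h
      · exact Or.inl h
      · exact Or.inr ⟨h, hle⟩
  -- threshold counts compare
  have hcount : ∀ k : ℕ,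
      (T.filter fun i => k < rnk Finset.univ (wlex y) i).card
        ≤ (T.filter fun i => k < rnk Finset.univ (wlex y') i).card := by
    intro k
    have hle := count_le T (wlex y) (wlex y') (wlex_inj y) (wlex_inj y') hkey k
    have hcompl : ∀ u : Fin n → ℝ,
        (T.filter fun i => k < rnk Finset.univ (wlex u) i).card
          + (T.filter fun i => rnk T (wlex u) i + rnk Tᶜ (wlex u) i ≤ k).card = T.card := by
      intro u
      have h1 : (T.filter fun i => rnk T (wlex u) i + rnk Tᶜ (wlex u) i ≤ k)
          = (T.filter fun i => ¬ k < rnk Finset.univ (wlex u) i) := by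
        apply Finset.filter_congr
        intro i _
        rw [rnk_univ_split T (wlex u) i]
        simp only [not_lt]
      rw [h1, Finset.card_filter_add_card_filter_not]
    have := hcompl y
    have := hcompl y'
    omega
  -- expand the sums and compare termwise
  rw [sum_phi T φ _ (rnk_wlex_le y), sum_phi T φ _ (rnk_wlex_le y')]
  apply add_le_add_right
  apply Finset.sum_le_sum
  intro k _
  rw [nsmul_eq_mul, nsmul_eq_mul]
  exact mul_le_mul_of_nonneg_right (Nat.cast_le.2 (hcount k))
    (sub_nonneg.2 (hφ (Nat.le_succ k)))
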